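/- Every optimal solution of the L-ESM subproblem automatically satisfies the complementarity condition p_m⁺ · p_m⁻ = 0 for every m ∈ U; that is, no prosumer simultaneously buys from and sells to the main grid at an optimum. -/
import Mathlib


open Finset

variable {U : Type*} [Fintype U]

/-- A point `(p, p⁺, p⁻, x)` is feasible for the L-ESM subproblem:
power balance, generator bounds, and nonnegativity of grid trades. -/
def Feasible (D pbar : U → ℝ) (p pp pm x : U → ℝ) : Prop :=
  ∀ m : U, D m + x m + pm m = p m + pp m ∧
    0 ≤ p m ∧ p m ≤ pbar m ∧ 0 ≤ pp m ∧ 0 ≤ pm m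

/-- Objective of the L-ESM subproblem at base price `w0`. -/
noncomputable def Objective (c b : U → ℝ) (wplus wminus a w0 : ℝ)
    (p pp pm x : U → ℝ) : ℝ :=
  (∑ m : U, (c m / 2 * (p m) ^ 2 + b m * p m + wplus * pp m
      - wminus * pm m - w0 * x m))
    + a / 2 * ∑ m : U, (x m) ^ 2 + a / 2 * (∑ m : U, x m) ^ 2

/-- `(p, p⁺, p⁻, x)` is an optimal solution of the L-ESM subproblem. -/
noncomputable def IsOptimal (c b D pbar : U → ℝ) (wplus wminus a w0 : ℝ)
    (p pp pm x : U → ℝ) : Prop :=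
  Feasible D pbar p pp pm x ∧
    ∀ q qp qm y : U → ℝ, Feasible D pbar q qp qm y →
      Objective c b wplus wminus a w0 p pp pm x ≤
        Objective c b wplus wminus a w0 q qp qm y

/-- every optimal solution satisfies the complementarity
condition `p⁺_m · p⁻_m = 0` for every prosumer `m`. -/
theorem lesm_optimal_complementarity [Nonempty U]
    (c b D pbar : U → ℝ) (wplus wminus a w0 : ℝ)
    (hc : ∀ m, 0 < c m) (hpbar : ∀ m, 0 ≤ pbar m)
    (hb : ∀ m, 0 < b m) (hbw : ∀ m, b m < wminus)
    (hw : wminus < wplus) (ha : 0 < a)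
    (p pp pm x : U → ℝ)
    (hopt : IsOptimal c b D pbar wplus wminus a w0 p pp pm x) :
    ∀ m : U, pp m * pm m = 0 := by
  intro m
  classical
  by_contra h
  obtain ⟨hfeas, hopt2⟩ := hopt
  obtain ⟨hbal, hp0, hpb, hpp0, hpm0⟩ := hfeas m
  have hpp : 0 < pp m := lt_of_le_of_ne hpp0 (fun e => h (by rw [← e]; ring))
  have hpm : 0 < pm m := lt_of_le_of_ne hpm0 (fun e => h (by rw [← e]; ring))
  set δ := min (pp m) (pm m) with hδdef
  have hδ : 0 < δ := lt_min hpp hpm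
  set qp := Function.update pp m (pp m - δ) with hqp
  set qm := Function.update pm m (pm m - δ) with hqm
  have hfeas' : Feasible D pbar p qp qm x := by
    intro k
    by_cases hk : k = m
    · subst hk
      obtain ⟨h1, h2, h3, h4, h5⟩ := hfeas k
      refine ⟨?_, h2, h3, ?_, ?_⟩ <;>
        simp only [hqp, hqm, Function.update_self]
      · linarith
      · linarith [min_le_left (pp k) (pm k)]
      · linarith [min_le_right (pp k) (pm k)]
    · simpa only [hqp, hqm, Function.update_of_ne hk] using hfeas k
  have hle := hopt2 p qp qm x hfeas'
  have hsum : ∑ k : U, (c k / 2 * (p k) ^ 2 + b k * p k + wplus * qp k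
      - wminus * qm k - w0 * x k)
      = (∑ k : U, (c k / 2 * (p k) ^ 2 + b k * p k + wplus * pp k
      - wminus * pm k - w0 * x k)) - (wplus - wminus) * δ := by
    have hdiff : ∑ k : U, ((c k / 2 * (p k) ^ 2 + b k * p k + wplus * qp k
        - wminus * qm k - w0 * x k)
        - (c k / 2 * (p k) ^ 2 + b k * p k + wplus * pp k
        - wminus * pm k - w0 * x k)) = -((wplus - wminus) * δ) := by
      rw [Fintype.sum_eq_single m]
      · simp only [hqp, hqm, Function.update_self]; ring
      · intro k hk
        simp only [hqp, hqm, Function.update_of_ne hk]; ring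
    have := Finset.sum_sub_distrib (s := Finset.univ)
      (f := fun k => c k / 2 * (p k) ^ 2 + b k * p k + wplus * qp k
        - wminus * qm k - w0 * x k)
      (g := fun k => c k / 2 * (p k) ^ 2 + b k * p k + wplus * pp k
        - wminus * pm k - w0 * x k)
    rw [this] at hdiff
    linarith
  have hobj : Objective c b wplus wminus a w0 p qp qm x
      = Objective c b wplus wminus a w0 p pp pm x - (wplus - wminus) * δ := by
    simp only [Objective, hsum]; ring
  rw [hobj] at hle
  nlinarith [mul_pos (sub_pos.mpr hw) hδ]
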